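/- Corollary (second part): For every index i : Fin n and every real ξ ≠ 0, let M⁽ⁱ⁾_ξ := Matrix.updateCol L i (fun k => L k i + ξ) be the matrix obtained from L by adding ξ•𝟙 to its i-th column. Then T_P equals the range of M⁽ⁱ⁾_ξ: for every x : Fin n → ℝ, x ∈ T_P if and only if there exists y : Fin n → ℝ with x = (M⁽ⁱ⁾_ξ).mulVec y. -/

import Mathlib

open Filter Matrix

theorem region_of_convergence_eq_range_updateCol_add_xi
    (n : ℕ) (hn : 0 < n) (P Q : Matrix (Fin n) (Fin n) ℝ)
    (hPnonneg : ∀ i j, 0 ≤ P i j) (hProw : ∀ i, ∑ j, P i j = 1)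
    (hconv : Tendsto (fun k => P ^ k) atTop (nhds Q))
    (i : Fin n) (ξ : ℝ) (hξ : ξ ≠ 0) :
    ∀ x : Fin n → ℝ,
      (∃ a : ℝ, ∀ j, Q.mulVec x j = a) ↔
        ∃ y : Fin n → ℝ,
          x = (Matrix.updateCol (1 - P) i (fun k => (1 - P) k i + ξ)).mulVec y := by
  -- entrywise convergence
  have hent : ∀ a b, Tendsto (fun k => (P ^ k) a b) atTop (nhds (Q a b)) := by
    intro a b
    exact (((continuous_apply b).comp (continuous_apply a)).tendsto Q).comp hconv
  -- rows of P^k sum to 1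
  have hPkrow : ∀ k j, ∑ l, (P ^ k) j l = 1 := by
    intro k
    induction k with
    | zero => intro j; simp [Matrix.one_apply]
    | succ k ih =>
      intro j
      rw [pow_succ]
      simp only [Matrix.mul_apply]
      calc ∑ l, ∑ m, (P ^ k) j m * P m l
          = ∑ m, ∑ l, (P ^ k) j m * P m l := Finset.sum_comm
        _ = ∑ m, (P ^ k) j m * ∑ l, P m l := by simp [Finset.mul_sum]
        _ = 1 := by simp [hProw, ih j]
  -- rows of Q sum to 1
  have hQrow : ∀ j, ∑ l, Q j l = 1 := by
    intro j
    have h1 : Tendsto (fun k => ∑ l, (P ^ k) j l) atTop (nhds (∑ l, Q j l)) :=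
      tendsto_finset_sum _ fun l _ => hent j l
    have h2 : (fun k => ∑ l, (P ^ k) j l) = fun _ => (1 : ℝ) := funext fun k => hPkrow k j
    rw [h2] at h1
    exact tendsto_nhds_unique h1 tendsto_const_nhds
  have hQP : Q * P = Q := by
    ext a b
    have h1 : Tendsto (fun k => ∑ m, (P ^ k) a m * P m b) atTop
        (nhds (∑ m, Q a m * P m b)) :=
      tendsto_finset_sum _ fun m _ => (hent a m).mul tendsto_const_nhds
    have h3 : (fun k => ∑ m, (P ^ k) a m * P m b) = fun k => (P ^ (k + 1)) a b := by
      funext k; rw [pow_succ, Matrix.mul_apply]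
    rw [h3] at h1
    have h2 : Tendsto (fun k => (P ^ (k + 1)) a b) atTop (nhds (Q a b)) :=
      (hent a b).comp (tendsto_add_atTop_nat 1)
    rw [Matrix.mul_apply]
    exact tendsto_nhds_unique h1 h2
  have hQQ : Q * Q = Q := by
    ext a b
    have h1 : Tendsto (fun k => ∑ m, (P ^ k) a m * (P ^ k) m b) atTop
        (nhds (∑ m, Q a m * Q m b)) :=
      tendsto_finset_sum _ fun m _ => (hent a m).mul (hent m b)
    have h3 : (fun k => ∑ m, (P ^ k) a m * (P ^ k) m b) = fun k => (P ^ (k + k)) a b := by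
      funext k; rw [pow_add, Matrix.mul_apply]
    rw [h3] at h1
    have h2 : Tendsto (fun k => (P ^ (k + k)) a b) atTop (nhds (Q a b)) :=
      (hent a b).comp (tendsto_atTop_mono (fun k => Nat.le_add_left k k) tendsto_id)
    rw [Matrix.mul_apply]
    exact tendsto_nhds_unique h1 h2
  have hQL : Q * (1 - P) = 0 := by rw [mul_sub, mul_one, hQP, sub_self]
  have hQA : Q * (1 - P + Q) = Q := by rw [mul_add, hQL, zero_add, hQQ]
  -- injectivity of 1 - P + Q
  have hinj : Function.Injective (Matrix.mulVecLin (1 - P + Q)) := by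
    rw [← LinearMap.ker_eq_bot, LinearMap.ker_eq_bot']
    intro v hv
    simp only [Matrix.mulVecLin_apply] at hv
    have hQv : Q.mulVec v = 0 := by
      have h := congrArg Q.mulVec hv
      rw [Matrix.mulVec_mulVec, hQA] at h
      simpa using h
    have hfix : P.mulVec v = v := by
      have h := hv
      rw [Matrix.add_mulVec, Matrix.sub_mulVec, Matrix.one_mulVec, hQv, add_zero] at h
      have := sub_eq_zero.mp h
      exact this.symm
    have hfixk : ∀ k, (P ^ k).mulVec v = v := by
      intro k
      induction k with
      | zero => simp
      | succ k ih => rw [pow_succ, ← Matrix.mulVec_mulVec, hfix, ih]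
    have hv0 : Q.mulVec v = v := by
      funext j
      have h1 : Tendsto (fun k => ∑ l, (P ^ k) j l * v l) atTop
          (nhds (∑ l, Q j l * v l)) :=
        tendsto_finset_sum _ fun l _ => (hent j l).mul tendsto_const_nhds
      have h2 : (fun k => ∑ l, (P ^ k) j l * v l) = fun _ => v j := by
        funext k
        have := congrFun (hfixk k) j
        simpa [Matrix.mulVec, dotProduct] using this
      rw [h2] at h1
      have : (∑ l, Q j l * v l) = Q.mulVec v j := rfl
      rw [← this]
      exact tendsto_nhds_unique h1 tendsto_const_nhds
    rw [hQv] at hv0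
    exact hv0.symm
  have hsurj : Function.Surjective (Matrix.mulVecLin (1 - P + Q)) :=
    (LinearMap.injective_iff_surjective).mp hinj
  -- key computation for M
  have hM : ∀ (y : Fin n → ℝ) j,
      (Matrix.updateCol (1 - P) i (fun k => (1 - P) k i + ξ)).mulVec y j
        = (1 - P).mulVec y j + ξ * y i := by
    intro y j
    simp only [Matrix.mulVec, dotProduct, Matrix.updateCol_apply]
    have key : ∀ l, (if l = i then ((1 - P) j i + ξ) else (1 - P) j l) * y l
        = (1 - P) j l * y l + (if l = i then ξ * y l else 0) := by
      intro l
      by_cases h : l = i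
      · subst h; simp; ring
      · simp [h]
    simp_rw [key]
    rw [Finset.sum_add_distrib, Finset.sum_ite_eq' Finset.univ i (fun l => ξ * y l)]
    simp
  -- row sums of L are 0
  have hLrow : ∀ j, ∑ l, (1 - P) j l = 0 := by
    intro j
    simp only [Matrix.sub_apply, Matrix.one_apply]
    rw [Finset.sum_sub_distrib, hProw]
    simp
  have hLconst : ∀ (c : ℝ) j, (1 - P).mulVec (fun _ => c) j = 0 := by
    intro c j
    simp only [Matrix.mulVec, dotProduct]
    rw [← Finset.sum_mul, hLrow, zero_mul]
  intro x
  constructor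
  · rintro ⟨a, ha⟩
    obtain ⟨w, hw⟩ := hsurj (x - Q.mulVec x)
    simp only [Matrix.mulVecLin_apply] at hw
    have hQw : Q.mulVec w = 0 := by
      have h := congrArg Q.mulVec hw
      rw [Matrix.mulVec_mulVec, hQA] at h
      rw [h, Matrix.mulVec_sub, Matrix.mulVec_mulVec, hQQ, sub_self]
    have hLw : (1 - P).mulVec w = x - Q.mulVec x := by
      rw [Matrix.add_mulVec, hQw, add_zero] at hw
      exact hw
    refine ⟨fun j' => w j' + (a / ξ - w i), ?_⟩
    have hyd : (fun j' => w j' + (a / ξ - w i)) = w + (fun _ : Fin n => a / ξ - w i) := rfl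
    funext j
    have h0 := hLconst (a / ξ - w i) j
    rw [hM, hyd, Matrix.mulVec_add, Pi.add_apply, h0, add_zero, congrFun hLw j,
        Pi.sub_apply, ha j]
    field_simp
    ring
  · rintro ⟨y, rfl⟩
    refine ⟨ξ * y i, fun j => ?_⟩
    have hMy : (Matrix.updateCol (1 - P) i (fun k => (1 - P) k i + ξ)).mulVec y
        = (1 - P).mulVec y + fun _ => ξ * y i := by
      funext j'; rw [hM]; rfl
    rw [hMy, Matrix.mulVec_add, Matrix.mulVec_mulVec, hQL]
    have hQconst : Q.mulVec (fun _ => ξ * y i) j = ξ * y i := by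
      simp only [Matrix.mulVec, dotProduct]
      rw [← Finset.sum_mul, hQrow, one_mul]
    simp [hQconst]
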